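/- Every magic labelling α ∈ N^12 of the cube can be written as α = q1α1 + q2α2 + q3α3 + q4α4 + q5α5 + q6α6 with q1, q2, q3, q6 ∈ N and q4, q5 ∈ Z, and this representation is unique. -/
import Mathlib


def IsMagic (x : Fin 12 → ℕ) (r : ℕ) : Prop :=
  x 0 + x 1 + x 8 = r ∧ x 0 + x 2 + x 9 = r ∧
  x 1 + x 3 + x 11 = r ∧ x 2 + x 3 + x 10 = r ∧
  x 4 + x 5 + x 8 = r ∧ x 4 + x 6 + x 9 = r ∧
  x 5 + x 7 + x 11 = r ∧ x 6 + x 7 + x 10 = r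

def a1 : Fin 12 → ℤ := ![0,1,1,0,1,0,0,1,0,0,0,0]
def a2 : Fin 12 → ℤ := ![1,0,0,1,0,1,1,0,0,0,0,0]
def a3 : Fin 12 → ℤ := ![1,0,0,0,1,0,0,0,0,0,1,1]
def a4 : Fin 12 → ℤ := ![0,1,0,0,0,1,0,0,0,1,1,0]
def a5 : Fin 12 → ℤ := ![1,0,0,1,1,0,0,1,0,0,0,0]
def a6 : Fin 12 → ℤ := ![0,0,0,1,0,0,0,1,1,1,0,0]

@[simp] lemma a1_val_0 : a1 0 = 0 := rfl
@[simp] lemma a1_val_1 : a1 1 = 1 := rfl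
@[simp] lemma a1_val_2 : a1 2 = 1 := rfl
@[simp] lemma a1_val_3 : a1 3 = 0 := rfl
@[simp] lemma a1_val_4 : a1 4 = 1 := rfl
@[simp] lemma a1_val_5 : a1 5 = 0 := rfl
@[simp] lemma a1_val_6 : a1 6 = 0 := rfl
@[simp] lemma a1_val_7 : a1 7 = 1 := rfl
@[simp] lemma a1_val_8 : a1 8 = 0 := rfl
@[simp] lemma a1_val_9 : a1 9 = 0 := rfl
@[simp] lemma a1_val_10 : a1 10 = 0 := rfl
@[simp] lemma a1_val_11 : a1 11 = 0 := rfl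
@[simp] lemma a2_val_0 : a2 0 = 1 := rfl
@[simp] lemma a2_val_1 : a2 1 = 0 := rfl
@[simp] lemma a2_val_2 : a2 2 = 0 := rfl
@[simp] lemma a2_val_3 : a2 3 = 1 := rfl
@[simp] lemma a2_val_4 : a2 4 = 0 := rfl
@[simp] lemma a2_val_5 : a2 5 = 1 := rfl
@[simp] lemma a2_val_6 : a2 6 = 1 := rfl
@[simp] lemma a2_val_7 : a2 7 = 0 := rfl
@[simp] lemma a2_val_8 : a2 8 = 0 := rfl
@[simp] lemma a2_val_9 : a2 9 = 0 := rfl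
@[simp] lemma a2_val_10 : a2 10 = 0 := rfl
@[simp] lemma a2_val_11 : a2 11 = 0 := rfl
@[simp] lemma a3_val_0 : a3 0 = 1 := rfl
@[simp] lemma a3_val_1 : a3 1 = 0 := rfl
@[simp] lemma a3_val_2 : a3 2 = 0 := rfl
@[simp] lemma a3_val_3 : a3 3 = 0 := rfl
@[simp] lemma a3_val_4 : a3 4 = 1 := rfl
@[simp] lemma a3_val_5 : a3 5 = 0 := rfl
@[simp] lemma a3_val_6 : a3 6 = 0 := rfl
@[simp] lemma a3_val_7 : a3 7 = 0 := rfl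
@[simp] lemma a3_val_8 : a3 8 = 0 := rfl
@[simp] lemma a3_val_9 : a3 9 = 0 := rfl
@[simp] lemma a3_val_10 : a3 10 = 1 := rfl
@[simp] lemma a3_val_11 : a3 11 = 1 := rfl
@[simp] lemma a4_val_0 : a4 0 = 0 := rfl
@[simp] lemma a4_val_1 : a4 1 = 1 := rfl
@[simp] lemma a4_val_2 : a4 2 = 0 := rfl
@[simp] lemma a4_val_3 : a4 3 = 0 := rfl
@[simp] lemma a4_val_4 : a4 4 = 0 := rfl
@[simp] lemma a4_val_5 : a4 5 = 1 := rfl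
@[simp] lemma a4_val_6 : a4 6 = 0 := rfl
@[simp] lemma a4_val_7 : a4 7 = 0 := rfl
@[simp] lemma a4_val_8 : a4 8 = 0 := rfl
@[simp] lemma a4_val_9 : a4 9 = 1 := rfl
@[simp] lemma a4_val_10 : a4 10 = 1 := rfl
@[simp] lemma a4_val_11 : a4 11 = 0 := rfl
@[simp] lemma a5_val_0 : a5 0 = 1 := rfl
@[simp] lemma a5_val_1 : a5 1 = 0 := rfl
@[simp] lemma a5_val_2 : a5 2 = 0 := rfl
@[simp] lemma a5_val_3 : a5 3 = 1 := rfl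
@[simp] lemma a5_val_4 : a5 4 = 1 := rfl
@[simp] lemma a5_val_5 : a5 5 = 0 := rfl
@[simp] lemma a5_val_6 : a5 6 = 0 := rfl
@[simp] lemma a5_val_7 : a5 7 = 1 := rfl
@[simp] lemma a5_val_8 : a5 8 = 0 := rfl
@[simp] lemma a5_val_9 : a5 9 = 0 := rfl
@[simp] lemma a5_val_10 : a5 10 = 0 := rfl
@[simp] lemma a5_val_11 : a5 11 = 0 := rfl
@[simp] lemma a6_val_0 : a6 0 = 0 := rfl
@[simp] lemma a6_val_1 : a6 1 = 0 := rfl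
@[simp] lemma a6_val_2 : a6 2 = 0 := rfl
@[simp] lemma a6_val_3 : a6 3 = 1 := rfl
@[simp] lemma a6_val_4 : a6 4 = 0 := rfl
@[simp] lemma a6_val_5 : a6 5 = 0 := rfl
@[simp] lemma a6_val_6 : a6 6 = 0 := rfl
@[simp] lemma a6_val_7 : a6 7 = 1 := rfl
@[simp] lemma a6_val_8 : a6 8 = 1 := rfl
@[simp] lemma a6_val_9 : a6 9 = 1 := rfl
@[simp] lemma a6_val_10 : a6 10 = 0 := rfl
@[simp] lemma a6_val_11 : a6 11 = 0 := rfl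

theorem magic_unique_representation (x : Fin 12 → ℕ) (r : ℕ) (h : IsMagic x r) :
    ∃! q : ℕ × ℕ × ℕ × ℤ × ℤ × ℕ,
      (fun i => (x i : ℤ)) =
        (q.1 : ℤ) • a1 + (q.2.1 : ℤ) • a2 + (q.2.2.1 : ℤ) • a3 +
        q.2.2.2.1 • a4 + q.2.2.2.2.1 • a5 + (q.2.2.2.2.2 : ℤ) • a6 := by
  obtain ⟨h1, h2, h3, h4, h5, h6, h7, h8⟩ := h
  refine ⟨(x 2, x 6, x 11, (x 1 : ℤ) - x 2, (x 0 : ℤ) - x 6 - x 11, x 8), ?_, ?_⟩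
  · funext i
    fin_cases i <;>
      simp <;> omega
  · rintro ⟨q1, q2, q3, q4, q5, q6⟩ hq
    have e0 := congrFun hq 0
    have e1 := congrFun hq 1
    have e2 := congrFun hq 2
    have e6 := congrFun hq 6
    have e8 := congrFun hq 8
    have e11 := congrFun hq 11
    simp at e0 e1 e2 e6 e8 e11
    refine Prod.ext ?_ (Prod.ext ?_ (Prod.ext ?_ (Prod.ext ?_ (Prod.ext ?_ ?_)))) <;>
      simp <;> omega
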